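/- arXiv:1306.1315 — 3 statements merged into one kernel-verified Lean document; each statement's English description precedes it below -/
import Mathlib

section
/- For any positive semi-definite n×n matrices A₁, A₂, A₃ with A₃ invertible, D(A₁,A₃[n−1]) · D(A₂,A₃[n−1]) − ((n−1)/n) · D(A₁,A₂,A₃[n−2]) · det(A₃) = det(A₃)² · tr(A₃⁻¹A₁A₃⁻¹A₂)/n², and in particular the left-hand side is non-negative. -/
section Aux

open Matrix Equiv Finset

private lemma sum_perm_zero' {m : ℕ} (f : Fin (m + 1) → ℝ) :
    ∑ σ : Equiv.Perm (Fin (m + 1)), f (σ 0) = m.factorial * ∑ q, f q := by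
  rw [← Equiv.sum_comp (Equiv.Perm.decomposeFin).symm (fun σ => f (σ 0)),
    Fintype.sum_prod_type]
  simp [Finset.sum_const, Fintype.card_perm, nsmul_eq_mul, Finset.mul_sum]

private lemma sum_perm_inv' {m : ℕ} (F : Equiv.Perm (Fin m) → ℝ) :
    ∑ σ : Equiv.Perm (Fin m), F σ⁻¹ = ∑ σ, F σ :=
  Equiv.sum_comp (Equiv.inv (Equiv.Perm (Fin m))) F

private lemma sum_perm_zero_one' {n : ℕ} (g : Fin (n + 2) → Fin (n + 2) → ℝ) :
    ∑ σ : Equiv.Perm (Fin (n + 2)), g (σ 0) (σ 1)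
      = n.factorial * ∑ p, (∑ q, g p q - g p p) := by
  rw [← Equiv.sum_comp (Equiv.Perm.decomposeFin).symm (fun σ => g (σ 0) (σ 1)),
    Fintype.sum_prod_type]
  have step : ∀ p : Fin (n + 2),
      (∑ τ : Equiv.Perm (Fin (n + 1)),
        g ((Equiv.Perm.decomposeFin).symm (p, τ) 0) ((Equiv.Perm.decomposeFin).symm (p, τ) 1))
      = n.factorial * (∑ q, g p q - g p p) := by
    intro p
    have h1 : ∀ τ : Equiv.Perm (Fin (n + 1)),
        g ((Equiv.Perm.decomposeFin).symm (p, τ) 0) ((Equiv.Perm.decomposeFin).symm (p, τ) 1)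
          = g p (Equiv.swap 0 p ((τ 0).succ)) := by
      intro τ
      rw [Equiv.Perm.decomposeFin_symm_apply_zero, Equiv.Perm.decomposeFin_symm_apply_one]
    rw [Finset.sum_congr rfl (fun τ _ => h1 τ),
      sum_perm_zero' (fun q => g p (Equiv.swap 0 p q.succ))]
    congr 1
    have h2 := Equiv.sum_comp (Equiv.swap (0 : Fin (n + 2)) p) (g p)
    rw [Fin.sum_univ_succ, Equiv.swap_apply_left] at h2
    linarith
  rw [Finset.sum_congr rfl (fun p _ => step p), ← Finset.mul_sum]

private lemma mul_updateColumn' {m : ℕ} (A C : Matrix (Fin m) (Fin m) ℝ) (j : Fin m)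
    (w : Fin m → ℝ) :
    A * (C.updateCol j w) = (A * C).updateCol j (A *ᵥ w) := by
  ext i j'
  by_cases h : j' = j <;>
    simp [Matrix.mul_apply, Matrix.updateCol_apply, Matrix.mulVec, dotProduct, h]

private lemma det_one_updateColumn' {m : ℕ} (p : Fin m) (x : Fin m → ℝ) :
    ((1 : Matrix (Fin m) (Fin m) ℝ).updateCol p x).det = x p := by
  have hM : (1 : Matrix (Fin m) (Fin m) ℝ).updateCol p x
      = 1 + replicateCol (Fin 1) (fun a => x a - (1 : Matrix (Fin m) (Fin m) ℝ) a p)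
          * replicateRow (Fin 1) (fun b => (1 : Matrix (Fin m) (Fin m) ℝ) p b) := by
    ext a b
    by_cases h : b = p
    · subst h; simp [Matrix.updateCol_apply, Matrix.mul_apply, Matrix.one_apply]
    · simp [Matrix.updateCol_apply, Matrix.mul_apply, Matrix.one_apply, h, Ne.symm h]
  rw [hM]; erw [det_one_add_replicateCol_mul_replicateRow]
  simp [dotProduct, Matrix.one_apply]

private lemma det_one_updateColumn_two' {m : ℕ} {p j : Fin m} (hpj : p ≠ j) (x y : Fin m → ℝ) :
    (((1 : Matrix (Fin m) (Fin m) ℝ).updateCol p x).updateCol j y).det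
      = x p * y j - x j * y p := by
  set e : Matrix (Fin m) (Fin m) ℝ := 1 with he
  set U : Matrix (Fin m) (Fin 2) ℝ :=
    Matrix.of (fun a t => if t = 0 then x a - e a p else y a - e a j) with hU
  set V : Matrix (Fin 2) (Fin m) ℝ :=
    Matrix.of (fun t b => if t = 0 then e p b else e j b) with hV
  have hM : (e.updateCol p x).updateCol j y = 1 + U * V := by
    ext a b
    by_cases hb : b = j
    · subst hb
      simp [hU, hV, he, Matrix.mul_apply, Fin.sum_univ_two, Matrix.updateCol_apply,
        Matrix.one_apply, hpj, Ne.symm hpj]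
    · by_cases hb' : b = p
      · subst hb'
        simp [hU, hV, he, Matrix.mul_apply, Fin.sum_univ_two, Matrix.updateCol_apply,
          Matrix.one_apply, hb, hpj, Ne.symm hpj]
      · simp [hU, hV, he, Matrix.mul_apply, Fin.sum_univ_two, Matrix.updateCol_apply,
          Matrix.one_apply, hb, hb', Ne.symm hb, Ne.symm hb']
  rw [hM, det_one_add_mul_comm, Matrix.det_fin_two]
  simp [hU, hV, he, Matrix.mul_apply, Matrix.one_apply, ite_mul, mul_ite, hpj, Ne.symm hpj]
  ring

private lemma trace_nonneg_of_posSemidef {m : ℕ} {M : Matrix (Fin m) (Fin m) ℝ}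
    (h : M.PosSemidef) : 0 ≤ M.trace := by
  apply Finset.sum_nonneg
  intro i _
  exact h.diag_nonneg

end Aux

/-- The mixed discriminant. -/
noncomputable def mixedDisc {n : ℕ} (A : Fin n → Matrix (Fin n) (Fin n) ℝ) : ℝ :=
  (1 / (Nat.factorial n : ℝ)) *
    ∑ σ : Equiv.Perm (Fin n), Matrix.det (Matrix.of fun i j => A (σ j) i j)

section Comp

open Matrix Equiv Finset

private lemma mixedDisc_one' {n : ℕ} (A B : Matrix (Fin (n + 2)) (Fin (n + 2)) ℝ)
    (hB : IsUnit B.det) :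
    mixedDisc (fun k => if k = 0 then A else B)
      = B.det * (B⁻¹ * A).trace / (n + 2) := by
  set X := B⁻¹ * A with hX
  have key : ∀ σ : Equiv.Perm (Fin (n + 2)),
      Matrix.det (Matrix.of fun i j => ((fun k => if k = 0 then A else B) (σ j)) i j)
        = B.det * X (σ⁻¹ 0) (σ⁻¹ 0) := by
    intro σ
    have hfac : (Matrix.of fun i j => ((fun k => if k = 0 then A else B) (σ j)) i j)
        = B * ((1 : Matrix _ _ ℝ).updateCol (σ⁻¹ 0) (fun i => X i (σ⁻¹ 0))) := by
      rw [mul_updateColumn', mul_one]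
      have hBX : B *ᵥ (fun i => X i (σ⁻¹ 0)) = fun i => A i (σ⁻¹ 0) := by
        have hprod : B * X = A := Matrix.mul_nonsing_inv_cancel_left B A hB
        funext i
        calc (B *ᵥ fun i => X i (σ⁻¹ 0)) i = (B * X) i (σ⁻¹ 0) := by
              simp [Matrix.mulVec, Matrix.mul_apply, dotProduct]
          _ = A i (σ⁻¹ 0) := by rw [hprod]
      rw [hBX]
      ext i j
      by_cases h : j = σ⁻¹ 0
      · subst h
        simp [Matrix.updateCol_apply]
      · have h0 : ¬ σ j = 0 := by
          intro hc
          exact h (by rw [← hc, Equiv.Perm.inv_def, Equiv.symm_apply_apply])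
        simp [Matrix.updateCol_apply, h, h0]
        exact fun hc => absurd hc h
    rw [hfac, Matrix.det_mul, det_one_updateColumn']
  rw [mixedDisc, Finset.sum_congr rfl (fun σ _ => key σ), ← Finset.mul_sum,
    sum_perm_inv' (fun σ => X (σ 0) (σ 0)), sum_perm_zero' (fun q => X q q)]
  have htr : ∑ q, X q q = X.trace := by simp [Matrix.trace, Matrix.diag]
  have hfact : ((n + 2).factorial : ℝ) = (n + 2) * (n + 1).factorial := by
    exact_mod_cast congrArg (Nat.cast : ℕ → ℝ) (Nat.factorial_succ (n + 1))
  rw [htr, hfact]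
  have h1 : ((n + 1).factorial : ℝ) ≠ 0 := Nat.cast_ne_zero.mpr (Nat.factorial_ne_zero _)
  have h2 : ((n : ℝ) + 2) ≠ 0 := by positivity
  field_simp

private lemma mixedDisc_two' {n : ℕ} (A₁ A₂ B : Matrix (Fin (n + 2)) (Fin (n + 2)) ℝ)
    (hB : IsUnit B.det) :
    mixedDisc (fun k => if k = 0 then A₁ else if k = 1 then A₂ else B)
      = B.det * ((B⁻¹ * A₁).trace * (B⁻¹ * A₂).trace - ((B⁻¹ * A₁) * (B⁻¹ * A₂)).trace)
        / ((n + 2) * (n + 1)) := by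
  set X := B⁻¹ * A₁ with hX
  set Y := B⁻¹ * A₂ with hY
  have h01 : (0 : Fin (n + 2)) ≠ 1 := Fin.zero_ne_one'
  set F : Fin (n + 2) → Fin (n + 2) → ℝ :=
    fun p q => X p p * Y q q - X q p * Y p q with hF
  have key : ∀ σ : Equiv.Perm (Fin (n + 2)),
      Matrix.det (Matrix.of fun i j =>
          ((fun k => if k = 0 then A₁ else if k = 1 then A₂ else B) (σ j)) i j)
        = B.det * F (σ⁻¹ 0) (σ⁻¹ 1) := by
    intro σ
    have hne : σ⁻¹ 0 ≠ σ⁻¹ 1 := fun hc => h01 (Equiv.injective σ⁻¹ hc)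
    have hfac : (Matrix.of fun i j =>
          ((fun k => if k = 0 then A₁ else if k = 1 then A₂ else B) (σ j)) i j)
        = B * (((1 : Matrix _ _ ℝ).updateCol (σ⁻¹ 0) (fun i => X i (σ⁻¹ 0))).updateCol
            (σ⁻¹ 1) (fun i => Y i (σ⁻¹ 1))) := by
      rw [mul_updateColumn', mul_updateColumn', mul_one]
      have hBX : B *ᵥ (fun i => X i (σ⁻¹ 0)) = fun i => A₁ i (σ⁻¹ 0) := by
        have hprod : B * X = A₁ := Matrix.mul_nonsing_inv_cancel_left B A₁ hB
        funext i
        calc (B *ᵥ fun i => X i (σ⁻¹ 0)) i = (B * X) i (σ⁻¹ 0) := by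
              simp [Matrix.mulVec, Matrix.mul_apply, dotProduct]
          _ = A₁ i (σ⁻¹ 0) := by rw [hprod]
      have hBY : B *ᵥ (fun i => Y i (σ⁻¹ 1)) = fun i => A₂ i (σ⁻¹ 1) := by
        have hprod : B * Y = A₂ := Matrix.mul_nonsing_inv_cancel_left B A₂ hB
        funext i
        calc (B *ᵥ fun i => Y i (σ⁻¹ 1)) i = (B * Y) i (σ⁻¹ 1) := by
              simp [Matrix.mulVec, Matrix.mul_apply, dotProduct]
          _ = A₂ i (σ⁻¹ 1) := by rw [hprod]
      rw [hBX, hBY]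
      ext i j
      by_cases h2 : j = σ⁻¹ 1
      · subst h2
        have hs1 : σ (σ⁻¹ 1) = 1 := σ.apply_symm_apply 1
        have hs0 : ¬ σ (σ⁻¹ 1) = 0 := by rw [hs1]; exact Ne.symm h01
        simp [Matrix.updateCol_apply, hs1, hs0]
      · by_cases h1 : j = σ⁻¹ 0
        · subst h1
          simp [Matrix.updateCol_apply, h2]
        · have hs0 : ¬ σ j = 0 := fun hc => h1 (by rw [← hc, Equiv.Perm.inv_def, Equiv.symm_apply_apply])
          have hs1 : ¬ σ j = 1 := fun hc => h2 (by rw [← hc, Equiv.Perm.inv_def, Equiv.symm_apply_apply])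
          simp [Matrix.updateCol_apply, h1, h2, hs0, hs1]
          exact ((if_neg h2).trans (if_neg h1)).symm
    rw [hfac, Matrix.det_mul, det_one_updateColumn_two' hne]
  rw [mixedDisc, Finset.sum_congr rfl (fun σ _ => key σ), ← Finset.mul_sum,
    sum_perm_inv' (fun σ => F (σ 0) (σ 1)), sum_perm_zero_one' F]
  have hFsum : ∑ p, (∑ q, F p q - F p p) = X.trace * Y.trace - (X * Y).trace := by
    have h0 : ∀ p, F p p = 0 := fun p => sub_self _
    have e1 : X.trace * Y.trace = ∑ p, ∑ q, X p p * Y q q := by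
      simp only [Matrix.trace, Matrix.diag]
      rw [Finset.sum_mul_sum]
    have e2 : (X * Y).trace = ∑ p, ∑ q, X q p * Y p q := by
      simp only [Matrix.trace, Matrix.diag, Matrix.mul_apply]
      exact Finset.sum_comm ..
    simp only [h0, sub_zero, hF, Finset.sum_sub_distrib, sub_self]
    rw [e1, e2]
  rw [hFsum]
  have hfact : ((n + 2).factorial : ℝ) = (n + 2) * ((n + 1) * n.factorial) := by
    have : (n + 2).factorial = (n + 2) * ((n + 1) * n.factorial) := by
      rw [Nat.factorial_succ, Nat.factorial_succ]
    exact_mod_cast congrArg (Nat.cast : ℕ → ℝ) this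
  rw [hfact]
  have h1 : ((n).factorial : ℝ) ≠ 0 := Nat.cast_ne_zero.mpr (Nat.factorial_ne_zero _)
  have h2 : ((n : ℝ) + 2) ≠ 0 := by positivity
  have h3 : ((n : ℝ) + 1) ≠ 0 := by positivity
  field_simp

end Comp

/-- `D(A₁,A₃[n−1]) · D(A₂,A₃[n−1]) − ((n−1)/n) · D(A₁,A₂,A₃[n−2]) · det A₃
  = det(A₃)² · tr(A₃⁻¹A₁A₃⁻¹A₂)/n² ≥ 0` (the ambient dimension is `n + 2 ≥ 2`). -/
theorem mixedDisc_sub_eq_trace {n : ℕ}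
    {A₁ A₂ A₃ : Matrix (Fin (n + 2)) (Fin (n + 2)) ℝ}
    (h₁ : A₁.PosSemidef) (h₂ : A₂.PosSemidef) (h₃ : A₃.PosDef) :
    mixedDisc (fun k => if k = 0 then A₁ else A₃) *
        mixedDisc (fun k => if k = 0 then A₂ else A₃) -
      ((n + 1 : ℝ) / (n + 2)) *
        mixedDisc (fun k => if k = 0 then A₁ else if k = 1 then A₂ else A₃) * A₃.det =
      A₃.det ^ 2 * (A₃⁻¹ * A₁ * A₃⁻¹ * A₂).trace / (n + 2 : ℝ) ^ 2 ∧
    0 ≤ mixedDisc (fun k => if k = 0 then A₁ else A₃) *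
        mixedDisc (fun k => if k = 0 then A₂ else A₃) -
      ((n + 1 : ℝ) / (n + 2)) *
        mixedDisc (fun k => if k = 0 then A₁ else if k = 1 then A₂ else A₃) * A₃.det := by
  have hdU : IsUnit A₃.det := h₃.det_pos.ne'.isUnit
  have htr : (A₃⁻¹ * A₁ * A₃⁻¹ * A₂).trace = ((A₃⁻¹ * A₁) * (A₃⁻¹ * A₂)).trace := by
    rw [Matrix.mul_assoc (A₃⁻¹ * A₁) A₃⁻¹ A₂]
  have heq : mixedDisc (fun k => if k = 0 then A₁ else A₃) *
        mixedDisc (fun k => if k = 0 then A₂ else A₃) -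
      ((n + 1 : ℝ) / (n + 2)) *
        mixedDisc (fun k => if k = 0 then A₁ else if k = 1 then A₂ else A₃) * A₃.det =
      A₃.det ^ 2 * (A₃⁻¹ * A₁ * A₃⁻¹ * A₂).trace / (n + 2 : ℝ) ^ 2 := by
    rw [mixedDisc_one' A₁ A₃ hdU, mixedDisc_one' A₂ A₃ hdU, mixedDisc_two' A₁ A₂ A₃ hdU, htr]
    have h2 : ((n : ℝ) + 2) ≠ 0 := by positivity
    have h3 : ((n : ℝ) + 1) ≠ 0 := by positivity
    field_simp
    ring
  refine ⟨heq, ?_⟩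
  rw [heq]
  have hP : (A₃⁻¹ * A₁ * A₃⁻¹).PosSemidef := by
    have := h₁.mul_mul_conjTranspose_same A₃⁻¹
    rwa [show Matrix.conjTranspose A₃⁻¹ = A₃⁻¹ from h₃.1.inv] at this
  obtain ⟨C, hC⟩ : ∃ C : Matrix (Fin (n + 2)) (Fin (n + 2)) ℝ, A₂ = C.conjTranspose * C := by
    open scoped MatrixOrder Matrix.Norms.L2Operator in
    exact CStarAlgebra.nonneg_iff_eq_star_mul_self.mp h₂.nonneg
  have htr2 : (A₃⁻¹ * A₁ * A₃⁻¹ * A₂).trace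
      = (C * (A₃⁻¹ * A₁ * A₃⁻¹) * C.conjTranspose).trace := by
    rw [hC, show A₃⁻¹ * A₁ * A₃⁻¹ * (C.conjTranspose * C) = (A₃⁻¹ * A₁ * A₃⁻¹ * C.conjTranspose) * C by
      simp only [Matrix.mul_assoc], Matrix.trace_mul_comm, ← Matrix.mul_assoc, ← Matrix.mul_assoc]
  have hQ : (C * (A₃⁻¹ * A₁ * A₃⁻¹) * C.conjTranspose).PosSemidef := hP.mul_mul_conjTranspose_same C
  have htnn : 0 ≤ (A₃⁻¹ * A₁ * A₃⁻¹ * A₂).trace := by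
    rw [htr2]; exact trace_nonneg_of_posSemidef hQ
  have h2 : (0:ℝ) < ((n : ℝ) + 2) ^ 2 := by positivity
  exact div_nonneg (mul_nonneg (sq_nonneg _) htnn) h2.le
end

section
/- The mixed discriminant of positive semi-definite matrices is non-negative: if A₁,…,Aₙ are symmetric positive semi-definite real n×n matrices, then D(A₁,…,Aₙ) ≥ 0. -/
theorem mixedDisc_nonneg {n : ℕ}
    {A : Fin n → Matrix (Fin n) (Fin n) ℝ}
    (hA : ∀ i, (A i).PosSemidef) :
    0 ≤ mixedDisc A := by
  classical
  open MatrixOrder in set B : Fin n → Matrix (Fin n) (Fin n) ℝ := fun k => CFC.sqrt (A k) with hB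
  have hBsymm : ∀ k i j, B k i j = B k j i := by
    intro k i j
    simp only [hB]
    open MatrixOrder in simpa using (Matrix.nonneg_iff_posSemidef.mp (CFC.sqrt_nonneg (A k))).isHermitian.apply j i
  have hAsymm : ∀ k i j, A k i j = A k j i := by
    intro k i j
    simpa using (hA k).isHermitian.apply j i
  have hAB : ∀ k i j, A k i j = ∑ m, B k m i * B k m j := by
    intro k i j
    have h : (B k * B k) i j = A k i j := by open MatrixOrder in rw [CFC.sqrt_mul_sqrt_self (A k) (hA k).nonneg]
    rw [← h, Matrix.mul_apply]
    exact Finset.sum_congr rfl fun m _ => by rw [hBsymm k i m]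
  -- The key expansion of each determinant
  have key : ∀ σ : Equiv.Perm (Fin n),
      Matrix.det (Matrix.of fun i j => A (σ j) i j)
        = ∑ f : Fin n → Fin n,
            (∏ i, B (σ i) (f i) i) * Matrix.det (Matrix.of fun i j => B (σ i) (f i) j) := by
    intro σ
    have step1 : Matrix.det (Matrix.of fun i j => A (σ j) i j)
        = Matrix.det (Matrix.of fun i j => A (σ i) i j) := by
      rw [← Matrix.det_transpose (Matrix.of fun i j => A (σ i) i j)]
      congr 1
      ext i j
      simp [Matrix.transpose_apply, hAsymm]
    rw [step1]
    have step2 : (Matrix.of fun i j => A (σ i) i j)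
        = fun i => ∑ m, B (σ i) m i • B (σ i) m := by
      ext i j
      simp [hAB, Finset.sum_apply, Matrix.of_apply]
    calc Matrix.det (Matrix.of fun i j => A (σ i) i j)
        = (Matrix.detRowAlternating : (Fin n → ℝ) [⋀^Fin n]→ₗ[ℝ] ℝ).toMultilinearMap
            (fun i => ∑ m, B (σ i) m i • B (σ i) m) := by rw [step2]; rfl
      _ = ∑ f : Fin n → Fin n,
            (Matrix.detRowAlternating : (Fin n → ℝ) [⋀^Fin n]→ₗ[ℝ] ℝ).toMultilinearMap
              (fun i => B (σ i) (f i) i • B (σ i) (f i)) :=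
          MultilinearMap.map_sum _ _
      _ = ∑ f : Fin n → Fin n,
            (∏ i, B (σ i) (f i) i) * Matrix.det (Matrix.of fun i j => B (σ i) (f i) j) := by
          refine Finset.sum_congr rfl fun f _ => ?_
          rw [MultilinearMap.map_smul_univ]
          rfl
  -- reindex the inner sum by h with f = h ∘ σ
  have key2 : ∀ σ : Equiv.Perm (Fin n),
      Matrix.det (Matrix.of fun i j => A (σ j) i j)
        = ∑ h : Fin n → Fin n,
            (∏ i, B (σ i) (h (σ i)) i) * Matrix.det (Matrix.of fun i j => B (σ i) (h (σ i)) j) := by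
    intro σ
    rw [key σ]
    refine (Fintype.sum_bijective (fun h : Fin n → Fin n => h ∘ σ)
      ((Equiv.arrowCongr (σ : Fin n ≃ Fin n).symm (Equiv.refl (Fin n))).bijective) _ _
      fun h => rfl).symm
  -- for each h the σ-sum is a square
  have key3 : ∀ h : Fin n → Fin n,
      (∑ σ : Equiv.Perm (Fin n),
        (∏ i, B (σ i) (h (σ i)) i) * Matrix.det (Matrix.of fun i j => B (σ i) (h (σ i)) j))
      = (Matrix.det (Matrix.of fun k j => B k (h k) j)) ^ 2 := by
    intro h
    set W : Matrix (Fin n) (Fin n) ℝ := Matrix.of fun k j => B k (h k) j with hW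
    have hsub : ∀ σ : Equiv.Perm (Fin n),
        (Matrix.of fun i j => B (σ i) (h (σ i)) j) = W.submatrix σ id := by
      intro σ; ext i j; rfl
    calc (∑ σ : Equiv.Perm (Fin n),
            (∏ i, B (σ i) (h (σ i)) i) * Matrix.det (Matrix.of fun i j => B (σ i) (h (σ i)) j))
        = ∑ σ : Equiv.Perm (Fin n),
            (∏ i, W (σ i) i) * ((Equiv.Perm.sign σ : ℝ) * W.det) := by
          refine Finset.sum_congr rfl fun σ _ => ?_
          rw [hsub σ, Matrix.det_permute]
          rfl
      _ = (∑ σ : Equiv.Perm (Fin n), (Equiv.Perm.sign σ : ℝ) * ∏ i, W (σ i) i) * W.det := by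
          rw [Finset.sum_mul]
          exact Finset.sum_congr rfl fun σ _ => by ring
      _ = W.det * W.det := by rw [← Matrix.det_apply' W]
      _ = W.det ^ 2 := (sq W.det).symm
  have total : (∑ σ : Equiv.Perm (Fin n), Matrix.det (Matrix.of fun i j => A (σ j) i j))
      = ∑ h : Fin n → Fin n, (Matrix.det (Matrix.of fun k j => B k (h k) j)) ^ 2 := by
    calc (∑ σ : Equiv.Perm (Fin n), Matrix.det (Matrix.of fun i j => A (σ j) i j))
        = ∑ σ : Equiv.Perm (Fin n), ∑ h : Fin n → Fin n,
            (∏ i, B (σ i) (h (σ i)) i) * Matrix.det (Matrix.of fun i j => B (σ i) (h (σ i)) j) :=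
          Finset.sum_congr rfl fun σ _ => key2 σ
      _ = ∑ h : Fin n → Fin n, ∑ σ : Equiv.Perm (Fin n),
            (∏ i, B (σ i) (h (σ i)) i) * Matrix.det (Matrix.of fun i j => B (σ i) (h (σ i)) j) :=
          Finset.sum_comm
      _ = ∑ h : Fin n → Fin n, (Matrix.det (Matrix.of fun k j => B k (h k) j)) ^ 2 :=
          Finset.sum_congr rfl fun h _ => key3 h
  rw [mixedDisc, total]
  positivity
end

section
/- For a convex body K ⊂ ℝⁿ and a unit vector u, the mean width integral satisfies ∫_{S^{n−1}} h_K dσ ≥ ∫_{S^{n−1}} h_{K|_u} dσ, where K|_u is the orthogonal projection of K onto the hyperplane u^⊥, h denotes the support function, and σ is the normalized Haar measure on the sphere. -/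
open MeasureTheory Metric Set

/-- The support function `h_K(v) = sup {⟨x, v⟩ : x ∈ K}`. -/
noncomputable def suppFn {n : ℕ} (K : Set (EuclideanSpace ℝ (Fin n)))
    (v : EuclideanSpace ℝ (Fin n)) : ℝ :=
  sSup ((fun x => inner ℝ x v : EuclideanSpace ℝ (Fin n) → ℝ) '' K)

/-- The normalized (rotation invariant, probability) measure on the unit sphere. -/
noncomputable def sphereMeasure (n : ℕ) :
    Measure (Metric.sphere (0 : EuclideanSpace ℝ (Fin n)) 1) :=
  ((volume : Measure (EuclideanSpace ℝ (Fin n))).toSphere Set.univ)⁻¹ •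
    (volume : Measure (EuclideanSpace ℝ (Fin n))).toSphere

section Aux
variable {E : Type*} [NormedAddCommGroup E] [NormedSpace ℝ E]
  [MeasurableSpace E] [BorelSpace E] [FiniteDimensional ℝ E]

/-- Map on the unit sphere induced by a linear isometry equivalence. -/
noncomputable def sphMap (f : E ≃ₗᵢ[ℝ] E) (v : sphere (0 : E) 1) : sphere (0 : E) 1 :=
  ⟨f v, by
    have := mem_sphere_zero_iff_norm.mp v.2
    simpa [mem_sphere_zero_iff_norm, f.norm_map] using this⟩

lemma continuous_sphMap (f : E ≃ₗᵢ[ℝ] E) : Continuous (sphMap f) :=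
  Continuous.subtype_mk (f.continuous.comp continuous_subtype_val) _

lemma sphMap_image_eq (f : E ≃ₗᵢ[ℝ] E) (s : Set (sphere (0 : E) 1)) :
    (Subtype.val '' ((homeomorphUnitSphereProd E) ⁻¹'
        ((sphMap f ⁻¹' s) ×ˢ Iio ⟨1, mem_Ioi.2 one_pos⟩))) =
      f ⁻¹' (Subtype.val '' ((homeomorphUnitSphereProd E) ⁻¹'
        (s ×ˢ Iio ⟨1, mem_Ioi.2 one_pos⟩))) := by
  ext x
  simp only [Set.mem_image, Set.mem_preimage, Set.mem_prod, Set.mem_Iio]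
  constructor
  · rintro ⟨⟨y, hy⟩, ⟨h1, h2⟩, rfl⟩
    refine ⟨⟨f y, by simpa using fun h => hy (f.map_eq_zero_iff.mp h)⟩, ⟨?_, ?_⟩, rfl⟩
    · convert h1 using 1
      ext
      simp [sphMap, homeomorphUnitSphereProd, f.norm_map, LinearIsometryEquiv.map_smul]
    · simpa [homeomorphUnitSphereProd, f.norm_map, ← Subtype.coe_lt_coe] using h2
  · rintro ⟨⟨y, hy⟩, ⟨h1, h2⟩, hxy⟩
    obtain rfl : y = f x := hxy
    have hx0 : x ≠ 0 := by
      intro h; exact hy (by simp [h])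
    refine ⟨⟨x, hx0⟩, ⟨?_, ?_⟩, rfl⟩
    · convert h1 using 1
      ext
      simp [sphMap, homeomorphUnitSphereProd, f.norm_map, LinearIsometryEquiv.map_smul]
    · simpa [homeomorphUnitSphereProd, f.norm_map, ← Subtype.coe_lt_coe] using h2

lemma map_sphMap_toSphere {n : ℕ} (f : EuclideanSpace ℝ (Fin n) ≃ₗᵢ[ℝ] EuclideanSpace ℝ (Fin n)) :
    Measure.map (sphMap f) (volume : Measure (EuclideanSpace ℝ (Fin n))).toSphere
      = (volume : Measure (EuclideanSpace ℝ (Fin n))).toSphere := by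
  ext s hs
  have hs' : MeasurableSet (sphMap f ⁻¹' s) := hs.preimage (continuous_sphMap f).measurable
  rw [Measure.map_apply (continuous_sphMap f).measurable hs,
    Measure.toSphere_apply' _ hs', Measure.toSphere_apply' _ hs,
    ← Measure.toSphere_apply_aux _ _ ⟨1, mem_Ioi.2 one_pos⟩,
    ← Measure.toSphere_apply_aux _ _ ⟨1, mem_Ioi.2 one_pos⟩,
    sphMap_image_eq f s]
  congr 1
  have hmeas : MeasurableSet (Subtype.val '' ((homeomorphUnitSphereProd (EuclideanSpace ℝ (Fin n))) ⁻¹'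
      (s ×ˢ Iio (⟨1, mem_Ioi.2 one_pos⟩ : Ioi (0:ℝ))))) := by
    exact (MeasurableEmbedding.subtype_coe (measurableSet_singleton (0:EuclideanSpace ℝ (Fin n))).compl).measurableSet_image.2
      ((Homeomorph.measurable _) (hs.prod measurableSet_Iio))
  exact f.measurePreserving.measure_preimage hmeas.nullMeasurableSet


lemma map_sphMap_sphereMeasure {n : ℕ}
    (f : EuclideanSpace ℝ (Fin n) ≃ₗᵢ[ℝ] EuclideanSpace ℝ (Fin n)) :
    Measure.map (sphMap f) (sphereMeasure n) = sphereMeasure n := by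
  rw [sphereMeasure, Measure.map_smul, map_sphMap_toSphere]

instance (n : ℕ) : IsFiniteMeasure (sphereMeasure n) := by
  constructor
  rw [sphereMeasure, Measure.smul_apply, smul_eq_mul]
  exact lt_of_le_of_lt (ENNReal.inv_mul_le_one _) ENNReal.one_lt_top

lemma integral_comp_sphMap {n : ℕ}
    (f : EuclideanSpace ℝ (Fin n) ≃ₗᵢ[ℝ] EuclideanSpace ℝ (Fin n))
    (g : Metric.sphere (0 : EuclideanSpace ℝ (Fin n)) 1 → ℝ) (hg : Continuous g) :
    ∫ v, g (sphMap f v) ∂(sphereMeasure n) = ∫ v, g v ∂(sphereMeasure n) := by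
  conv_rhs => rw [← map_sphMap_sphereMeasure f]
  rw [integral_map (continuous_sphMap f).aemeasurable hg.aestronglyMeasurable]


section suppFn
variable {n : ℕ} {K : Set (EuclideanSpace ℝ (Fin n))}

lemma suppFn_bddAbove (hKc : IsCompact K) (v : EuclideanSpace ℝ (Fin n)) :
    BddAbove ((fun x => inner ℝ x v : EuclideanSpace ℝ (Fin n) → ℝ) '' K) :=
  (hKc.image (Continuous.inner continuous_id continuous_const)).bddAbove

lemma le_suppFn (hKc : IsCompact K) {x : EuclideanSpace ℝ (Fin n)} (hx : x ∈ K)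
    (v : EuclideanSpace ℝ (Fin n)) : (inner ℝ x v : ℝ) ≤ suppFn K v :=
  le_csSup (suppFn_bddAbove hKc v) ⟨x, hx, rfl⟩

lemma suppFn_le (hKne : K.Nonempty) {v : EuclideanSpace ℝ (Fin n)} {c : ℝ}
    (h : ∀ x ∈ K, (inner ℝ x v : ℝ) ≤ c) : suppFn K v ≤ c :=
  csSup_le (hKne.image _) (by rintro a ⟨x, hx, rfl⟩; exact h x hx)

lemma suppFn_lipschitz (hKc : IsCompact K) (hKne : K.Nonempty) :
    ∃ C : NNReal, LipschitzWith C (suppFn K) := by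
  obtain ⟨C, hC⟩ := hKc.isBounded.exists_norm_le
  refine ⟨⟨max C 0, le_max_right _ _⟩, LipschitzWith.of_dist_le_mul fun v w => ?_⟩
  have key : ∀ a b : EuclideanSpace ℝ (Fin n),
      suppFn K a - suppFn K b ≤ max C 0 * dist a b := by
    intro a b
    rw [sub_le_iff_le_add]
    refine suppFn_le hKne fun x hx => ?_
    have h1 : (inner ℝ x a : ℝ) = inner ℝ x b + inner ℝ x (a - b) := by
      rw [← inner_add_right]; congr 1; abel
    rw [h1]
    have h2 : (inner ℝ x (a - b) : ℝ) ≤ max C 0 * dist a b := by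
      calc (inner ℝ x (a-b) : ℝ) ≤ ‖x‖ * ‖a - b‖ := real_inner_le_norm x _
        _ ≤ max C 0 * dist a b := by
            rw [dist_eq_norm]
            exact mul_le_mul (le_trans (hC x hx) (le_max_left _ _)) le_rfl (norm_nonneg _)
              (le_max_right _ _)
    linarith [le_suppFn hKc hx b]
  rw [Real.dist_eq, abs_sub_le_iff]
  exact ⟨key v w, by have h := key w v; rw [dist_comm] at h; exact h⟩

lemma suppFn_continuous (hKc : IsCompact K) (hKne : K.Nonempty) :
    Continuous (suppFn K) := by
  obtain ⟨C, h⟩ := suppFn_lipschitz hKc hKne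
  exact h.continuous

end suppFn

end Aux

/-- The mean width does not increase when passing to the projection of `K`
onto the hyperplane `u^⊥`. -/
theorem meanWidth_proj_le {n : ℕ}
    {K : Set (EuclideanSpace ℝ (Fin n))}
    (hK : Convex ℝ K) (hKc : IsCompact K) (hKne : K.Nonempty)
    {u : EuclideanSpace ℝ (Fin n)} (hu : ‖u‖ = 1) :
    ∫ v : Metric.sphere (0 : EuclideanSpace ℝ (Fin n)) 1,
        suppFn K (v : EuclideanSpace ℝ (Fin n)) ∂(sphereMeasure n) ≥
      ∫ v : Metric.sphere (0 : EuclideanSpace ℝ (Fin n)) 1,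
        suppFn ((fun x => (Submodule.orthogonalProjection (ℝ ∙ u)ᗮ x :
            EuclideanSpace ℝ (Fin n))) '' K) (v : EuclideanSpace ℝ (Fin n))
          ∂(sphereMeasure n) := by
  set W := (ℝ ∙ u)ᗮ
  set P : EuclideanSpace ℝ (Fin n) → EuclideanSpace ℝ (Fin n) := fun x => (Submodule.orthogonalProjection W x : EuclideanSpace ℝ (Fin n)) with hP
  set R : EuclideanSpace ℝ (Fin n) ≃ₗᵢ[ℝ] EuclideanSpace ℝ (Fin n) := Submodule.reflection W with hR
  set K' : Set (EuclideanSpace ℝ (Fin n)) := P '' K with hK'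
  have hPcont : Continuous P := continuous_subtype_val.comp (Submodule.orthogonalProjection W).continuous
  have hK'c : IsCompact K' := by rw [hK']; exact hKc.image hPcont
  have hK'ne : K'.Nonempty := by rw [hK']; exact hKne.image _
  -- pointwise bound
  have hpt : ∀ v : EuclideanSpace ℝ (Fin n), suppFn K' v ≤ (suppFn K v + suppFn K (R v)) / 2 := by
    intro v
    refine suppFn_le hK'ne ?_
    rintro y ⟨x, hx, rfl⟩
    have h1 : (inner ℝ (P x) v : ℝ) = inner ℝ x ((Submodule.orthogonalProjection W v : EuclideanSpace ℝ (Fin n))) :=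
      by simpa only [Submodule.starProjection_apply] using Submodule.inner_starProjection_left_eq_right W x v
    have h2 : (inner ℝ x (R v) : ℝ) = 2 * inner ℝ x ((Submodule.orthogonalProjection W v : EuclideanSpace ℝ (Fin n))) - inner ℝ x v := by
      rw [hR, Submodule.reflection_apply, Submodule.starProjection_apply, inner_sub_right, two_smul, inner_add_right]; ring
    have h3 := le_suppFn hKc hx v
    have h4 := le_suppFn hKc hx (R v)
    simp only [hP] at h1 ⊢
    linarith
  -- integrability
  set φ := sphMap R
  set g : Metric.sphere (0 : EuclideanSpace ℝ (Fin n)) 1 → ℝ := fun v => suppFn K (v : EuclideanSpace ℝ (Fin n)) with hg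
  have hgc : Continuous g := (suppFn_continuous hKc hKne).comp continuous_subtype_val
  have hg'c : Continuous fun v : Metric.sphere (0 : EuclideanSpace ℝ (Fin n)) 1 => suppFn K' (v : EuclideanSpace ℝ (Fin n)) :=
    (suppFn_continuous hK'c hK'ne).comp continuous_subtype_val
  have hgφc : Continuous fun v => g (φ v) := hgc.comp (continuous_sphMap R)
  have hcs : ∀ f : Metric.sphere (0 : EuclideanSpace ℝ (Fin n)) 1 → ℝ, HasCompactSupport f := fun f =>
    IsCompact.of_isClosed_subset isCompact_univ (isClosed_tsupport f) (Set.subset_univ _)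
  have int1 : Integrable g (sphereMeasure n) := hgc.integrable_of_hasCompactSupport (hcs g)
  have int2 : Integrable (fun v => g (φ v)) (sphereMeasure n) :=
    hgφc.integrable_of_hasCompactSupport (hcs _)
  have int3 : Integrable (fun v : Metric.sphere (0 : EuclideanSpace ℝ (Fin n)) 1 => suppFn K' (v : EuclideanSpace ℝ (Fin n)))
      (sphereMeasure n) := hg'c.integrable_of_hasCompactSupport (hcs _)
  have key : ∫ v : Metric.sphere (0 : EuclideanSpace ℝ (Fin n)) 1, suppFn K' (v : EuclideanSpace ℝ (Fin n)) ∂(sphereMeasure n) ≤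
      ∫ v, (g v + g (φ v)) / 2 ∂(sphereMeasure n) := by
    refine integral_mono int3 (by exact (int1.add int2).div_const 2) fun v => hpt (v : EuclideanSpace ℝ (Fin n))
  have split : ∫ v, (g v + g (φ v)) / 2 ∂(sphereMeasure n) =
      (∫ v, g v ∂(sphereMeasure n) + ∫ v, g (φ v) ∂(sphereMeasure n)) / 2 := by
    rw [integral_div, integral_add int1 int2]
  rw [ge_iff_le]
  calc ∫ v : Metric.sphere (0 : EuclideanSpace ℝ (Fin n)) 1, suppFn K' (v : EuclideanSpace ℝ (Fin n)) ∂(sphereMeasure n)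
      ≤ (∫ v, g v ∂(sphereMeasure n) + ∫ v, g (φ v) ∂(sphereMeasure n)) / 2 := by
        rw [← split]; exact key
    _ = ∫ v, g v ∂(sphereMeasure n) := by
        rw [integral_comp_sphMap R g hgc]; ring
end
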